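/- Let G : ℝ^d → ℝ be differentiable with L-Lipschitz gradient (L > 0) and bounded: |G(x)| ≤ B for all x ∈ ℝ^d (B > 0). Let k ≤ d, fix 0 < c < 1/2, set the step size α = c/L, and let T ≥ 1. Let θ₀ ∈ ℝ^d be k-sparse, let g₀, …, g_{T−1} ∈ ℝ^d, and for each t let θ_{t+1} be a minimizer of u ↦ ‖u − (θ_t − α g_t)‖ over all k-sparse u ∈ ℝ^d. Then, with c₁ = (2c(1−2c) + 2)/(c(1−2c)) and c₂ = (12 − 8c)/(1 − 2c), the following convergence bound holds: (1/T) · Σ_{t=0}^{T−1} ‖g_t − ∇G(θ_{t+1}) + (1/α)(θ_{t+1} − θ_t)‖² ≤ c₁ · (1/T) · Σ_{t=0}^{T−1} ‖g_t − ∇G(θ_t)‖² + c₂ · B/(αT). -/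

import Mathlib

open scoped RealInnerProductSpace

set_option maxHeartbeats 1000000

lemma descent_lemma {d : ℕ} (G : EuclideanSpace ℝ (Fin d) → ℝ) (L : ℝ) (hL : 0 < L)
    (hGdiff : Differentiable ℝ G)
    (hGlip : ∀ x y : EuclideanSpace ℝ (Fin d),
      ‖gradient G x - gradient G y‖ ≤ L * ‖x - y‖)
    (x y : EuclideanSpace ℝ (Fin d)) :
    G y ≤ G x + ⟪gradient G x, y - x⟫ + L / 2 * ‖y - x‖ ^ 2 := by
  set Δ : EuclideanSpace ℝ (Fin d) := y - x with hΔ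
  set c1 : ℝ := ⟪gradient G x, Δ⟫ with hc1
  set c2 : ℝ := L / 2 * ‖Δ‖ ^ 2 with hc2
  set ψ : ℝ → ℝ := fun s => G (x + s • Δ) - s * c1 - s ^ 2 * c2 with hψ
  have hγ : ∀ s : ℝ, HasDerivAt (fun u : ℝ => x + u • Δ) Δ s := by
    intro s
    have h1 : HasDerivAt (fun u : ℝ => u • Δ) ((1 : ℝ) • Δ) s :=
      (hasDerivAt_id s).smul_const Δ
    simpa using h1.const_add x
  have hder : ∀ s : ℝ, HasDerivAt (fun u : ℝ => G (x + u • Δ))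
      ⟪gradient G (x + s • Δ), Δ⟫ s := by
    intro s
    have hF := (hGdiff (x + s • Δ)).hasGradientAt.hasFDerivAt
    have := hF.comp_hasDerivAt s (hγ s)
    simpa [InnerProductSpace.toDual_apply_apply, Function.comp_def] using this
  have hψder : ∀ s : ℝ, HasDerivAt ψ
      (⟪gradient G (x + s • Δ), Δ⟫ - c1 - 2 * s * c2) s := by
    intro s
    have h1 := (hder s).sub (hasDerivAt_mul_const c1)
    have h2 := (hasDerivAt_pow 2 s).mul_const c2
    have := h1.sub h2
    refine this.congr_deriv ?_
    ring
  have hmono : AntitoneOn ψ (Set.Icc (0:ℝ) 1) := by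
    apply antitoneOn_of_deriv_nonpos (convex_Icc 0 1)
    · exact fun s _ => ((hψder s).differentiableAt).continuousAt.continuousWithinAt
    · exact fun s _ => ((hψder s).differentiableAt).differentiableWithinAt
    · intro s hs
      rw [interior_Icc] at hs
      rw [(hψder s).deriv]
      have hd : (x + s • Δ) - x = s • Δ := by abel
      have h1 : ⟪gradient G (x + s • Δ) - gradient G x, Δ⟫ ≤ L * s * ‖Δ‖ ^ 2 := by
        calc ⟪gradient G (x + s • Δ) - gradient G x, Δ⟫
            ≤ ‖gradient G (x + s • Δ) - gradient G x‖ * ‖Δ‖ := real_inner_le_norm _ _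
          _ ≤ (L * ‖(x + s • Δ) - x‖) * ‖Δ‖ := by
              apply mul_le_mul_of_nonneg_right (hGlip _ _) (norm_nonneg _)
          _ = L * s * ‖Δ‖ ^ 2 := by
              rw [hd, norm_smul]
              simp [abs_of_pos hs.1]
              ring
      have h2 : ⟪gradient G (x + s • Δ) - gradient G x, Δ⟫
          = ⟪gradient G (x + s • Δ), Δ⟫ - c1 := by
        rw [inner_sub_left, hc1]
      rw [hc2]
      nlinarith [h1, h2]
  have h01 : ψ 1 ≤ ψ 0 := hmono (by simp) (by norm_num) (by norm_num)
  have e0 : ψ 0 = G x := by simp [hψ]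
  have e1 : ψ 1 = G y - c1 - c2 := by
    have hxy : x + Δ = y := by rw [hΔ]; abel
    simp [hψ, hxy]
  rw [e0, e1] at h01
  linarith


/-- The `L₀` pseudo-norm: number of nonzero coordinates. -/
noncomputable def l0norm {d : ℕ} (z : EuclideanSpace ℝ (Fin d)) : ℕ :=
  (Finset.univ.filter fun i => z i ≠ 0).card

/-- Deterministic backbone of the main convergence theorem (Theorem 1): with step size
`α = c/L`, `0 < c < 1/2`, the average squared stationarity witness along the
hard-thresholding iterates is bounded by
`c₁ (1/T) Σ ‖g_t − ∇G(θ_t)‖² + c₂ B/(αT)` with `c₁ = (2c(1−2c)+2)/(c(1−2c))` and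
`c₂ = (12−8c)/(1−2c)`. -/
theorem hard_thresholding_convergence_bound
    (d k : ℕ) (hk : k ≤ d) (G : EuclideanSpace ℝ (Fin d) → ℝ) (L B : ℝ)
    (hL : 0 < L) (hB : 0 < B)
    (hGdiff : Differentiable ℝ G)
    (hGlip : ∀ x y : EuclideanSpace ℝ (Fin d),
      ‖gradient G x - gradient G y‖ ≤ L * ‖x - y‖)
    (hGbound : ∀ x, |G x| ≤ B)
    (c α : ℝ) (hc0 : 0 < c) (hc1 : c < 1 / 2) (hα : α = c / L)
    (T : ℕ) (hT : 1 ≤ T)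
    (θ g : ℕ → EuclideanSpace ℝ (Fin d))
    (hθ0 : l0norm (θ 0) ≤ k)
    (hsparse : ∀ t < T, l0norm (θ (t + 1)) ≤ k)
    (hmin : ∀ t < T, ∀ u : EuclideanSpace ℝ (Fin d), l0norm u ≤ k →
      ‖θ (t + 1) - (θ t - α • g t)‖ ≤ ‖u - (θ t - α • g t)‖)
    (c₁ c₂ : ℝ)
    (hc₁ : c₁ = (2 * c * (1 - 2 * c) + 2) / (c * (1 - 2 * c)))
    (hc₂ : c₂ = (12 - 8 * c) / (1 - 2 * c)) :
    (1 / T : ℝ) * ∑ t ∈ Finset.range T,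
        ‖g t - gradient G (θ (t + 1)) + α⁻¹ • (θ (t + 1) - θ t)‖ ^ 2 ≤
      c₁ * ((1 / T : ℝ) * ∑ t ∈ Finset.range T, ‖g t - gradient G (θ t)‖ ^ 2) +
        c₂ * B / (α * T) := by
  have hαpos : 0 < α := by rw [hα]; positivity
  have hLα : L * α = c := by rw [hα]; field_simp
  have hc2' : (0:ℝ) < 1 - 2 * c := by linarith
  have h1c : (0:ℝ) < 1 - c := by linarith
  set V : ℝ := ∑ t ∈ Finset.range T,
      ‖g t - gradient G (θ (t + 1)) + α⁻¹ • (θ (t + 1) - θ t)‖ ^ 2 with hV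
  set EE : ℝ := ∑ t ∈ Finset.range T, ‖g t - gradient G (θ t)‖ ^ 2 with hEE
  set P : ℝ := ∑ t ∈ Finset.range T,
      ⟪g t - gradient G (θ t), θ (t + 1) - θ t⟫ with hP
  set D : ℝ := ∑ t ∈ Finset.range T, ‖θ (t + 1) - θ t‖ ^ 2 with hD
  -- sparsity of all iterates
  have hsp : ∀ t, t < T → l0norm (θ t) ≤ k := by
    intro t ht
    cases t with
    | zero => exact hθ0
    | succ s => exact hsparse s (by omega)
  -- minimizer inequality
  have hA1 : ∀ t, t < T →
      2 * α * ⟪g t, θ (t + 1) - θ t⟫ ≤ -‖θ (t + 1) - θ t‖ ^ 2 := by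
    intro t ht
    have hm := hmin t ht (θ t) (hsp t ht)
    have hL1 : θ (t + 1) - (θ t - α • g t) = (θ (t + 1) - θ t) + α • g t := by abel
    have hR1 : θ t - (θ t - α • g t) = α • g t := by abel
    rw [hL1, hR1] at hm
    have hsq := pow_le_pow_left₀ (norm_nonneg _) hm 2
    rw [norm_add_sq_real, real_inner_smul_right] at hsq
    rw [real_inner_comm] at hsq
    linarith [hsq]
  -- per-step descent inequality
  have hstep1 : ∀ t ∈ Finset.range T,
      2 * α * ⟪g t - gradient G (θ t), θ (t + 1) - θ t⟫
        + (1 - c) * ‖θ (t + 1) - θ t‖ ^ 2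
        ≤ 2 * α * (G (θ t) - G (θ (t + 1))) := by
    intro t ht
    rw [Finset.mem_range] at ht
    have hd := descent_lemma G L hL hGdiff hGlip (θ t) (θ (t + 1))
    have hsplit : ⟪gradient G (θ t), θ (t + 1) - θ t⟫
        = ⟪g t, θ (t + 1) - θ t⟫
          - ⟪g t - gradient G (θ t), θ (t + 1) - θ t⟫ := by
      rw [inner_sub_left]; ring
    rw [hsplit] at hd
    have hd2 := mul_le_mul_of_nonneg_left hd (by positivity : (0:ℝ) ≤ 2 * α)
    have hA := hA1 t ht
    have hLΔ : α * L * ‖θ (t + 1) - θ t‖ ^ 2 = c * ‖θ (t + 1) - θ t‖ ^ 2 := by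
      rw [mul_comm α L, hLα]
    linarith [hd2, hA, hLΔ]
  -- summed inequality 1
  have h1' : 2 * α * P + (1 - c) * D ≤ 4 * α * B := by
    have hsum := Finset.sum_le_sum hstep1
    rw [Finset.sum_add_distrib, ← Finset.mul_sum, ← Finset.mul_sum, ← Finset.mul_sum,
      Finset.sum_range_sub' (fun t => G (θ t))] at hsum
    have hb0 := abs_le.mp (hGbound (θ 0))
    have hbT := abs_le.mp (hGbound (θ T))
    have : 2 * α * (G (θ 0) - G (θ T)) ≤ 2 * α * (2 * B) :=
      mul_le_mul_of_nonneg_left (by linarith [hb0.1, hb0.2, hbT.1, hbT.2])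
        (by positivity)
    rw [← hP, ← hD] at hsum
    linarith [hsum, this]
  -- summed Young inequality
  have h2' : -(4 * α * (1 - c)) * P ≤ 4 * α ^ 2 * EE + (1 - c) ^ 2 * D := by
    have hstep2 : ∀ t ∈ Finset.range T,
        -(4 * α * (1 - c)) * ⟪g t - gradient G (θ t), θ (t + 1) - θ t⟫
          ≤ 4 * α ^ 2 * ‖g t - gradient G (θ t)‖ ^ 2
            + (1 - c) ^ 2 * ‖θ (t + 1) - θ t‖ ^ 2 := by
      intro t _
      have hi := abs_real_inner_le_norm (g t - gradient G (θ t)) (θ (t + 1) - θ t)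
      have hi1 := (abs_le.mp hi).1
      have key : 4 * α * (1 - c) * (‖g t - gradient G (θ t)‖ * ‖θ (t + 1) - θ t‖)
          ≤ 4 * α ^ 2 * ‖g t - gradient G (θ t)‖ ^ 2
            + (1 - c) ^ 2 * ‖θ (t + 1) - θ t‖ ^ 2 := by
        nlinarith [sq_nonneg (2 * α * ‖g t - gradient G (θ t)‖
          - (1 - c) * ‖θ (t + 1) - θ t‖)]
      have hmul := mul_le_mul_of_nonneg_left (neg_le_neg hi1)
        (by positivity : (0:ℝ) ≤ 4 * α * (1 - c))
      linarith [hmul, key]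
    have hsum := Finset.sum_le_sum hstep2
    rw [Finset.sum_add_distrib, ← Finset.mul_sum, ← Finset.mul_sum, ← Finset.mul_sum] at hsum
    rw [← hP, ← hEE, ← hD] at hsum
    exact hsum
  -- summed v-bound
  have h3' : α ^ 2 * V ≤ 2 * α ^ 2 * EE + 4 * α * P + (2 + 2 * c ^ 2) * D := by
    have hstep3 : ∀ t ∈ Finset.range T,
        α ^ 2 * ‖g t - gradient G (θ (t + 1)) + α⁻¹ • (θ (t + 1) - θ t)‖ ^ 2
          ≤ 2 * α ^ 2 * ‖g t - gradient G (θ t)‖ ^ 2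
            + 4 * α * ⟪g t - gradient G (θ t), θ (t + 1) - θ t⟫
            + (2 + 2 * c ^ 2) * ‖θ (t + 1) - θ t‖ ^ 2 := by
      intro t _
      set e := g t - gradient G (θ t) with he
      set Δv := θ (t + 1) - θ t with hΔv
      set b := gradient G (θ t) - gradient G (θ (t + 1)) with hb
      have hvdecomp : g t - gradient G (θ (t + 1)) + α⁻¹ • Δv
          = (e + α⁻¹ • Δv) + b := by
        rw [he, hb]; abel
      have hna : ‖e + α⁻¹ • Δv‖ ^ 2
          = ‖e‖ ^ 2 + 2 * (α⁻¹ * ⟪e, Δv⟫) + (α⁻¹) ^ 2 * ‖Δv‖ ^ 2 := by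
        rw [norm_add_sq_real, real_inner_smul_right, norm_smul, Real.norm_eq_abs,
          abs_of_pos (inv_pos.mpr hαpos)]
        ring
      have hbn : ‖b‖ ≤ L * ‖Δv‖ := by
        have := hGlip (θ t) (θ (t + 1))
        rw [hb, hΔv]
        calc ‖gradient G (θ t) - gradient G (θ (t + 1))‖
            ≤ L * ‖θ t - θ (t + 1)‖ := this
          _ = L * ‖θ (t + 1) - θ t‖ := by rw [norm_sub_rev]
      have htri : ‖g t - gradient G (θ (t + 1)) + α⁻¹ • Δv‖ ≤ ‖e + α⁻¹ • Δv‖ + ‖b‖ := by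
        rw [hvdecomp]; exact norm_add_le _ _
      have hv2 := pow_le_pow_left₀ (norm_nonneg _) htri 2
      have hb2 := pow_le_pow_left₀ (norm_nonneg b) hbn 2
      have q1 : 2 * α ^ 2 * ‖e + α⁻¹ • Δv‖ ^ 2
          = 2 * α ^ 2 * ‖e‖ ^ 2 + 4 * α * ⟪e, Δv⟫ + 2 * ‖Δv‖ ^ 2 := by
        rw [hna]; field_simp; ring
      have q2 : 2 * α ^ 2 * (L * ‖Δv‖) ^ 2 = 2 * c ^ 2 * ‖Δv‖ ^ 2 := by
        have : (L * α) ^ 2 = c ^ 2 := by rw [hLα]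
        nlinarith [this]
      linarith [mul_le_mul_of_nonneg_left hv2 (sq_nonneg α),
        mul_le_mul_of_nonneg_left hb2 (sq_nonneg α), q1, q2,
        mul_nonneg (sq_nonneg α) (sq_nonneg (‖e + α⁻¹ • Δv‖ - ‖b‖))]
    have hsum := Finset.sum_le_sum hstep3
    rw [Finset.sum_add_distrib, Finset.sum_add_distrib, ← Finset.mul_sum, ← Finset.mul_sum,
      ← Finset.mul_sum, ← Finset.mul_sum] at hsum
    rw [← hV, ← hEE, ← hP, ← hD] at hsum
    exact hsum
  -- nonnegativity
  have hE0 : 0 ≤ EE := Finset.sum_nonneg fun t _ => by positivity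
  have hD0 : 0 ≤ D := Finset.sum_nonneg fun t _ => by positivity
  -- bound on D
  have hDbound : (1 - c) ^ 2 * D ≤ 8 * α * (1 - c) * B + 4 * α ^ 2 * EE := by
    have h1m := mul_le_mul_of_nonneg_left h1' (by linarith : (0:ℝ) ≤ 2 * (1 - c))
    linarith [h1m, h2']
  -- combined V bound
  have hV2 : α ^ 2 * V ≤ 2 * α ^ 2 * EE + 8 * α * B + (2 * c + 2 * c ^ 2) * D := by
    linarith [h3', h1']
  -- polynomial positivity facts
  have hp : (0:ℝ) < 1 - 2 * c - 3 * c ^ 2 + 4 * c ^ 3 + 8 * c ^ 4 := by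
    nlinarith [sq_nonneg (c - 1/4), sq_nonneg c, sq_nonneg (1 - 2*c), mul_pos hc0 hc2',
      sq_nonneg (c - 1/2), mul_pos (mul_pos hc0 hc0) hc2']
  have hq : (0:ℝ) < 1 - 3 * c + 2 * c ^ 2 + 8 * c ^ 3 := by
    nlinarith [sq_nonneg (c - 1/4), mul_pos hc0 hc2', sq_nonneg c]
  have hcc : (0:ℝ) < c * (1 - 2 * c) := mul_pos hc0 hc2'
  -- coefficient inequalities
  have iE : 2 * (1 - c) ^ 2 + 4 * (2 * c + 2 * c ^ 2) ≤ c₁ * (1 - c) ^ 2 := by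
    rw [hc₁, div_mul_eq_mul_div, le_div_iff₀ hcc]
    nlinarith [hp]
  have iB : 8 * (1 - c) ^ 2 + 8 * (1 - c) * (2 * c + 2 * c ^ 2) ≤ c₂ * (1 - c) ^ 2 := by
    rw [hc₂, div_mul_eq_mul_div, le_div_iff₀ hc2']
    nlinarith [mul_pos h1c hq]
  -- final combination
  have hfin2 : (1 - c) ^ 2 * (α ^ 2 * V)
      ≤ (1 - c) ^ 2 * (c₁ * (α ^ 2 * EE) + c₂ * (α * B)) := by
    have hV2m := mul_le_mul_of_nonneg_left hV2 (sq_nonneg (1 - c))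
    have hDk := mul_le_mul_of_nonneg_left hDbound
      (by nlinarith : (0:ℝ) ≤ 2 * c + 2 * c ^ 2)
    have hiE := mul_le_mul_of_nonneg_right iE
      (by positivity : (0:ℝ) ≤ α ^ 2 * EE)
    have hiB := mul_le_mul_of_nonneg_right iB
      (by positivity : (0:ℝ) ≤ α * B)
    linarith [hV2m, hDk, hiE, hiB]
  have hfin : α ^ 2 * V ≤ c₁ * (α ^ 2 * EE) + c₂ * (α * B) :=
    le_of_mul_le_mul_left hfin2 (by positivity)
  have key : V ≤ c₁ * EE + c₂ * B / α := by
    have hα2 : (0:ℝ) < α ^ 2 := by positivity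
    have heq : α ^ 2 * (c₁ * EE + c₂ * B / α) = c₁ * (α ^ 2 * EE) + c₂ * (α * B) := by
      field_simp
    have : α ^ 2 * V ≤ α ^ 2 * (c₁ * EE + c₂ * B / α) := by rw [heq]; exact hfin
    exact le_of_mul_le_mul_left this hα2
  have hTpos : (0:ℝ) < T := by
    have : (0:ℕ) < T := by omega
    exact_mod_cast this
  calc (1 / T : ℝ) * V ≤ (1 / T : ℝ) * (c₁ * EE + c₂ * B / α) :=
        mul_le_mul_of_nonneg_left key (by positivity)
    _ = c₁ * ((1 / T : ℝ) * EE) + c₂ * B / (α * T) := by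
        field_simp
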